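/- Fix a node u ∈ S, a subset V ⊆ C(u), a child v ∈ C(u) \ V, and a subset W ⊆ C(v). Then: (i) if V = ∅ and W = ∅, then D^u_{V,W}(v) = dist(u,v); (ii) if V = ∅ and W ≠ ∅, then D^u_{V,W}(v) = min_{y ∈ T(W)} (dist(u,y) + D^v_W(y)); (iii) if V ≠ ∅ and W = ∅, then D^u_{V,W}(v) = min_{x ∈ T(V)} (D^u_V(x) + dist(x,v)); (iv) if V ≠ ∅ and W ≠ ∅, then D^u_{V,W}(v) = min_{x ∈ T(V), y ∈ T(W)} (D^u_V(x) + dist(x,y) + D^v_W(y)). -/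

import Mathlib

/-- A rooted tree on a vertex type `V`, given by a parent function under which
every vertex reaches the root. -/
structure ParentTree (V : Type) where
  root : V
  parent : V → V
  parent_root : parent root = root
  reaches_root : ∀ v, ∃ k, parent^[k] v = root

namespace ParentTree

variable {V : Type}

/-- The set `C(u)` of children of `u`. -/
def children (T : ParentTree V) (u : V) : Set V := {v | T.parent v = u ∧ v ≠ u}

/-- The set `T(u)` of descendants of `u` (including `u` itself). -/
def desc (T : ParentTree V) (u : V) : Set V := {b | ∃ k, T.parent^[k] b = u}

/-- For a set `U` of siblings, `T(U) = ⋃_{u ∈ U} T(u)`. -/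
def descU (T : ParentTree V) (U : Set V) : Set V := ⋃ u ∈ U, T.desc u

end ParentTree

/-- The set of points occurring in a list. -/
def listSet {V : Type} (l : List V) : Set V := {x | x ∈ l}

/-- The weight of a path (a list of points), i.e. the sum of distances over
consecutive pairs. -/
def pathWeight {V X : Type} [MetricSpace X] (f : V → X) (l : List V) : ℝ :=
  ((l.zip l.tail).map fun p => dist (f p.1) (f p.2)).sum

/-- The elements of `A` occur consecutively in the list `l`. -/
def ConsecutiveIn {V : Type} (A : Set V) (l : List V) : Prop :=
  ∃ m : List V, m <:+: l ∧ listSet m = A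

/-- A path conforms to the rooted tree `T` if for every node `w` with
`T(w)` contained in the vertex set of the path, the elements of `T(w)` occur
consecutively in the path. -/
def PathConforms {V : Type} (T : ParentTree V) (l : List V) : Prop :=
  ∀ w : V, T.desc w ⊆ listSet l → ConsecutiveIn (T.desc w) l

/-- `DD T f u Vs a` : the minimum weight `D^u_{Vs}(a)` of a conforming path of
pairwise distinct points that starts at `u`, has vertex set `{u} ∪ T(Vs)`, and
ends at `a`. -/
noncomputable def DD {V X : Type} [MetricSpace X] (T : ParentTree V) (f : V → X)
    (u : V) (Vs : Set V) (a : V) : ℝ :=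
  sInf {w | ∃ l : List V, l.Nodup ∧ l.head? = some u ∧ l.getLast? = some a ∧
    listSet l = {u} ∪ T.descU Vs ∧ PathConforms T l ∧ pathWeight f l = w}

/-- `DW T f u Vs v Ws` : the minimum weight `D^u_{Vs,Ws}(v)` of a conforming path of
pairwise distinct points that starts at `u`, ends at `v`, has vertex set
`{u} ∪ T(Vs) ∪ T(Ws) ∪ {v}`, and in which `{u} ∪ T(Vs)` occurs as a prefix. -/
noncomputable def DW {V X : Type} [MetricSpace X] (T : ParentTree V) (f : V → X)
    (u : V) (Vs : Set V) (v : V) (Ws : Set V) : ℝ :=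
  sInf {w | ∃ l : List V, l.Nodup ∧ l.head? = some u ∧ l.getLast? = some v ∧
    listSet l = {u} ∪ T.descU Vs ∪ T.descU Ws ∪ {v} ∧ PathConforms T l ∧
    (∃ l₁ l₂ : List V, l = l₁ ++ l₂ ∧ listSet l₁ = {u} ∪ T.descU Vs) ∧
    pathWeight f l = w}


namespace ParentTree

variable {V : Type}

lemma mem_desc_self (T : ParentTree V) (a : V) : a ∈ T.desc a := ⟨0, rfl⟩

lemma desc_trans (T : ParentTree V) {a b c : V} (h1 : c ∈ T.desc b) (h2 : b ∈ T.desc a) :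
    c ∈ T.desc a := by
  obtain ⟨j, hj⟩ := h1; obtain ⟨k, hk⟩ := h2
  exact ⟨k + j, by rw [Function.iterate_add_apply, hj, hk]⟩

lemma eq_root_of_cycle (T : ParentTree V) {a : V} {s : ℕ} (hs : 0 < s)
    (h : T.parent^[s] a = a) : a = T.root := by
  obtain ⟨k, hk⟩ := T.reaches_root a
  have h1 : T.parent^[s * k] a = a := by
    rw [Function.iterate_mul]; exact Function.iterate_fixed h k
  have h2 : k ≤ s * k := Nat.le_mul_of_pos_left k hs
  have h3 : T.parent^[(s*k - k) + k] a = a := by rwa [Nat.sub_add_cancel h2]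
  rw [Function.iterate_add_apply, hk, Function.iterate_fixed T.parent_root] at h3
  exact h3.symm

lemma desc_comparable (T : ParentTree V) {a b x : V} (ha : x ∈ T.desc a) (hb : x ∈ T.desc b) :
    a ∈ T.desc b ∨ b ∈ T.desc a := by
  obtain ⟨j, hj⟩ := ha; obtain ⟨k, hk⟩ := hb
  rcases le_total j k with h | h
  · exact Or.inl ⟨k - j, by rw [← hj, ← Function.iterate_add_apply, Nat.sub_add_cancel h, hk]⟩
  · exact Or.inr ⟨j - k, by rw [← hk, ← Function.iterate_add_apply, Nat.sub_add_cancel h, hj]⟩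

lemma mem_desc_of_child (T : ParentTree V) {u c : V} (hc : c ∈ T.children u) : c ∈ T.desc u :=
  ⟨1, by simp [hc.1]⟩

lemma desc_subset_of_child (T : ParentTree V) {u c : V} (hc : c ∈ T.children u) :
    T.desc c ⊆ T.desc u := fun _ hb => T.desc_trans hb (T.mem_desc_of_child hc)

lemma not_mem_desc_child (T : ParentTree V) {u c : V} (hc : c ∈ T.children u) :
    u ∉ T.desc c := by
  rintro ⟨k, hk⟩
  have h1 : T.parent^[k+1] u = u := by
    rw [Function.iterate_succ_apply', hk, hc.1]
  have h2 := T.eq_root_of_cycle (Nat.succ_pos k) h1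
  apply hc.2
  rw [← hk, h2, Function.iterate_fixed T.parent_root]

lemma child_unique (T : ParentTree V) {u c c' x : V} (hc : c ∈ T.children u)
    (hc' : c' ∈ T.children u) (h : x ∈ T.desc c) (h' : x ∈ T.desc c') : c = c' := by
  have key : ∀ a b : V, a ∈ T.children u → b ∈ T.children u → a ∈ T.desc b → a = b := by
    rintro a b ha hb ⟨s, hs⟩
    rcases Nat.eq_zero_or_pos s with rfl | hspos
    · exact hs
    · obtain ⟨t, rfl⟩ := Nat.exists_eq_succ_of_ne_zero hspos.ne'
      have hbt : b = T.parent^[t] u := by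
        rw [← hs, Function.iterate_succ_apply, ha.1]
      have hcyc : T.parent^[t+1] u = u := by
        rw [Function.iterate_succ_apply', ← hbt, hb.1]
      have hroot := T.eq_root_of_cycle (Nat.succ_pos t) hcyc
      exact absurd (by rw [hbt, hroot, Function.iterate_fixed T.parent_root]) hb.2
  rcases T.desc_comparable h h' with hcc | hcc
  · exact key c c' hc hc' hcc
  · exact (key c' c hc' hc hcc).symm

lemma desc_eq_self_union (T : ParentTree V) (u : V) :
    T.desc u = {u} ∪ T.descU (T.children u) := by
  classical
  ext b
  constructor
  · rintro ⟨k, hk⟩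
    by_cases hbu : b = u
    · exact Or.inl hbu
    · right
      have hP : ∃ k, T.parent^[k] b = u := ⟨k, hk⟩
      set k0 := Nat.find hP with hk0def
      have hk0 := Nat.find_spec hP
      have hk0pos : 0 < k0 := by
        rcases Nat.eq_zero_or_pos k0 with h0 | h0
        · rw [← hk0def, h0] at hk0; exact absurd hk0 hbu
        · exact h0
      set c := T.parent^[k0-1] b with hcdef
      have hpc : T.parent c = u := by
        have : T.parent (T.parent^[k0-1] b) = T.parent^[(k0-1)+1] b :=
          (Function.iterate_succ_apply' T.parent (k0-1) b).symm
        rw [hcdef, this, Nat.sub_add_cancel hk0pos, ← hk0def] at *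
        exact hk0
      have hcu : c ≠ u := fun hcu =>
        Nat.find_min hP (Nat.sub_lt hk0pos Nat.one_pos) (hcdef ▸ hcu)
      simp only [descU, Set.mem_iUnion]
      exact ⟨c, ⟨hpc, hcu⟩, ⟨k0 - 1, rfl⟩⟩
  · rintro (hbu | hb)
    · exact hbu ▸ T.mem_desc_self u
    · simp only [descU, Set.mem_iUnion] at hb
      obtain ⟨c, hc, hbc⟩ := hb
      exact T.desc_subset_of_child hc hbc

lemma descU_subset_desc (T : ParentTree V) {u : V} {U : Set V} (hU : U ⊆ T.children u) :
    T.descU U ⊆ T.desc u := by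
  intro b hb
  simp only [descU, Set.mem_iUnion] at hb
  obtain ⟨c, hc, hbc⟩ := hb
  exact T.desc_subset_of_child (hU hc) hbc

lemma mem_descU {T : ParentTree V} {U : Set V} {b : V} :
    b ∈ T.descU U ↔ ∃ c ∈ U, b ∈ T.desc c := by
  simp [descU]

end ParentTree

section ListLemmas

variable {V X : Type} [MetricSpace X]

lemma mem_listSet {x : V} {l : List V} : x ∈ listSet l ↔ x ∈ l := Iff.rfl

lemma listSet_nil : listSet ([] : List V) = ∅ := by ext x; simp [listSet]

lemma listSet_cons (a : V) (l : List V) : listSet (a :: l) = insert a (listSet l) := by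
  ext x; simp [listSet]

lemma listSet_append (l₁ l₂ : List V) : listSet (l₁ ++ l₂) = listSet l₁ ∪ listSet l₂ := by
  ext x; simp [listSet]

lemma listSet_reverse (l : List V) : listSet l.reverse = listSet l := by
  ext x; simp [listSet]

lemma listSet_singleton (a : V) : listSet [a] = {a} := by ext x; simp [listSet]

lemma pathWeight_nil (f : V → X) : pathWeight f ([] : List V) = 0 := by simp [pathWeight]

lemma pathWeight_singleton (f : V → X) (a : V) : pathWeight f [a] = 0 := by simp [pathWeight]

lemma pathWeight_cons_cons (f : V → X) (a b : V) (l : List V) :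
    pathWeight f (a :: b :: l) = dist (f a) (f b) + pathWeight f (b :: l) := by
  simp [pathWeight]

lemma pathWeight_nonneg (f : V → X) (l : List V) : 0 ≤ pathWeight f l := by
  apply List.sum_nonneg
  intro x hx
  simp only [List.mem_map] at hx
  obtain ⟨p, _, rfl⟩ := hx
  exact dist_nonneg

lemma pathWeight_append (f : V → X) {l₁ : List V} {x : V} (h : l₁.getLast? = some x)
    (y : V) (t : List V) :
    pathWeight f (l₁ ++ y :: t) = pathWeight f l₁ + dist (f x) (f y) + pathWeight f (y :: t) := by
  induction l₁ generalizing x with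
  | nil => simp at h
  | cons a l ih =>
    cases l with
    | nil =>
      simp only [List.getLast?_singleton, Option.some_inj] at h
      subst h
      simp [pathWeight_cons_cons, pathWeight_singleton]
    | cons b r =>
      have h' : (b :: r).getLast? = some x := by
        rw [← h]; simp [List.getLast?_cons_cons]
      have : (a :: b :: r) ++ y :: t = a :: ((b :: r) ++ y :: t) := by simp
      rw [this, show (b :: r) ++ y :: t = b :: (r ++ y :: t) from by simp,
        pathWeight_cons_cons, ← show (b :: r) ++ y :: t = b :: (r ++ y :: t) from by simp,
        ih h', pathWeight_cons_cons]
      ring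

lemma pathWeight_reverse (f : V → X) (l : List V) : pathWeight f l.reverse = pathWeight f l := by
  induction l with
  | nil => simp
  | cons a l ih =>
    cases l with
    | nil => simp
    | cons b r =>
      have h1 : (a :: b :: r).reverse = (b :: r).reverse ++ a :: [] := by simp
      have h2 : (b :: r).reverse.getLast? = some b := by simp
      rw [h1, pathWeight_append f h2 a [], ih, pathWeight_cons_cons, pathWeight_singleton,
        dist_comm]
      ring

lemma head?_append_of_ne_nil {l₁ : List V} (l₂ : List V) (h : l₁ ≠ []) :
    (l₁ ++ l₂).head? = l₁.head? := by cases l₁ <;> simp_all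

lemma infix_of_prefix_part {m l₁ l₂ : List V} (hnd : (l₁ ++ l₂).Nodup)
    (hinf : m <:+: l₁ ++ l₂) (hsub : ∀ x ∈ m, x ∈ l₁) : m <:+: l₁ := by
  rcases eq_or_ne m [] with rfl | hm
  · exact List.nil_infix
  obtain ⟨s, t, hst⟩ := hinf
  have hst' : l₁ ++ l₂ = s ++ (m ++ t) := by rw [← hst, List.append_assoc]
  have hmlen : 0 < m.length := List.length_pos_iff.2 hm
  have hlen : s.length + m.length ≤ l₁.length := by
    by_contra hlt
    push_neg at hlt
    set j := max l₁.length s.length with hj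
    have hl1le : l₁.length ≤ j := le_max_left _ _
    have hslt : s.length ≤ j := le_max_right _ _
    have hjlt2 : j < s.length + m.length := by omega
    have hjlt : j < (l₁ ++ l₂).length := by
      have : (l₁ ++ l₂).length = s.length + (m.length + t.length) := by
        rw [hst']; simp
      omega
    obtain ⟨a, ha⟩ : ∃ a, (l₁ ++ l₂)[j]? = some a := ⟨_, List.getElem?_eq_getElem hjlt⟩
    have ham : a ∈ m := by
      have ha2 := ha
      rw [hst', List.getElem?_append_right hslt] at ha2
      have hj3 : j - s.length < m.length := by omega
      rw [List.getElem?_append, if_pos hj3] at ha2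
      exact List.mem_of_getElem? ha2
    have hal2 : a ∈ l₂ := by
      rw [List.getElem?_append_right hl1le] at ha
      exact List.mem_of_getElem? ha
    exact (List.disjoint_of_nodup_append hnd) (hsub a ham) hal2
  have e : l₁.take (s.length + m.length) = s ++ m := by
    have e1 : (l₁ ++ l₂).take (s.length + m.length) = l₁.take (s.length + m.length) :=
      List.take_append_of_le_length hlen
    have e2 : (l₁ ++ l₂).take (s.length + m.length) = s ++ m := by
      rw [← hst]
      have : s.length + m.length = (s ++ m).length := by simp
      rw [this, List.take_left]
    rw [← e1, e2]
  have h1 : (s ++ m) <+: l₁ := e ▸ List.take_prefix _ _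
  exact List.IsInfix.trans ⟨s, [], by simp⟩ h1.isInfix

lemma infix_of_suffix_part {m l₁ l₂ : List V} (hnd : (l₁ ++ l₂).Nodup)
    (hinf : m <:+: l₁ ++ l₂) (hsub : ∀ x ∈ m, x ∈ l₂) : m <:+: l₂ := by
  have h1 : m.reverse <:+: l₂.reverse ++ l₁.reverse := by
    rw [← List.reverse_append]
    exact List.reverse_infix.2 hinf
  have hnd' : (l₂.reverse ++ l₁.reverse).Nodup := by
    rw [← List.reverse_append, List.nodup_reverse]
    exact hnd
  have := infix_of_prefix_part hnd' h1 (fun x hx => by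
    simp only [List.mem_reverse] at *
    exact hsub x (by simpa using hx))
  exact List.reverse_infix.1 this

end ListLemmas

section Conf

variable {V : Type} {T : ParentTree V}

open ParentTree in
lemma ConsecutiveIn.of_infix {A : Set V} {l l' : List V} (h : ConsecutiveIn A l')
    (hl : l' <:+: l) : ConsecutiveIn A l := by
  obtain ⟨m, hm, hs⟩ := h; exact ⟨m, hm.trans hl, hs⟩

lemma ConsecutiveIn.rev {A : Set V} {l : List V} (h : ConsecutiveIn A l) :
    ConsecutiveIn A l.reverse := by
  obtain ⟨m, hm, hs⟩ := h
  exact ⟨m.reverse, List.reverse_infix.2 hm, by rw [listSet_reverse]; exact hs⟩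

lemma PathConforms.rev {l : List V} (h : PathConforms T l) : PathConforms T l.reverse := by
  intro w hw
  rw [listSet_reverse] at hw
  exact (h w hw).rev

lemma PathConforms.append_left {l₁ l₂ : List V} (h : PathConforms T (l₁ ++ l₂))
    (hnd : (l₁ ++ l₂).Nodup) : PathConforms T l₁ := by
  intro w hw
  have hw' : T.desc w ⊆ listSet (l₁ ++ l₂) := by
    rw [listSet_append]; exact hw.trans Set.subset_union_left
  obtain ⟨m, hm, hs⟩ := h w hw'
  exact ⟨m, infix_of_prefix_part hnd hm (fun x hx => hw (hs ▸ hx)), hs⟩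

lemma PathConforms.append_right {l₁ l₂ : List V} (h : PathConforms T (l₁ ++ l₂))
    (hnd : (l₁ ++ l₂).Nodup) : PathConforms T l₂ := by
  intro w hw
  have hw' : T.desc w ⊆ listSet (l₁ ++ l₂) := by
    rw [listSet_append]; exact hw.trans Set.subset_union_right
  obtain ⟨m, hm, hs⟩ := h w hw'
  exact ⟨m, infix_of_suffix_part hnd hm (fun x hx => hw (hs ▸ hx)), hs⟩

/-- Joining disjoint conforming pieces, one for each `c` in a list `cs`. -/
lemma joinAux (T : ParentTree V) (P : V → Prop)
    (hP : ∀ c, P c → ∃ l : List V, l.Nodup ∧ listSet l = T.desc c ∧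
      (∀ w ∈ T.desc c, ConsecutiveIn (T.desc w) l)) :
    ∀ cs : List V, (∀ c ∈ cs, P c) →
      cs.Pairwise (fun c c' => ∀ z, z ∈ T.desc c → z ∈ T.desc c' → False) →
      ∃ L : List V, L.Nodup ∧ listSet L = T.descU {c | c ∈ cs} ∧
        (∀ w c, c ∈ cs → w ∈ T.desc c → ConsecutiveIn (T.desc w) L) := by
  intro cs
  induction cs with
  | nil =>
    intro _ _
    refine ⟨[], List.nodup_nil, ?_, by simp⟩
    rw [listSet_nil]
    ext z; simp [ParentTree.mem_descU]
  | cons c cs ihc =>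
    intro hPs hdisj
    obtain ⟨L, hLnd, hLset, hLcons⟩ := ihc (fun c' hc' => hPs c' (List.mem_cons_of_mem _ hc'))
      hdisj.of_cons
    obtain ⟨lc, hlcnd, hlcset, hlccons⟩ := hP c (hPs c List.mem_cons_self)
    have hdisj2 : lc.Disjoint L := by
      intro z hz1 hz2
      have hz1' : z ∈ T.desc c := hlcset ▸ hz1
      have hz2' : z ∈ T.descU {c' | c' ∈ cs} := hLset ▸ hz2
      rw [ParentTree.mem_descU] at hz2'
      obtain ⟨c', hc', hzc'⟩ := hz2'
      exact (List.rel_of_pairwise_cons hdisj hc') z hz1' hzc'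
    refine ⟨lc ++ L, ?_, ?_, ?_⟩
    · rw [List.nodup_append]; exact ⟨hlcnd, hLnd, fun a ha b hb hab => hdisj2 ha (by rw [hab]; exact hb)⟩
    · rw [listSet_append, hlcset, hLset]
      ext z; simp only [ParentTree.mem_descU, Set.mem_union, Set.mem_setOf_eq, List.mem_cons]
      constructor
      · rintro (h | ⟨c', hc', h⟩)
        · exact ⟨c, Or.inl rfl, h⟩
        · exact ⟨c', Or.inr hc', h⟩
      · rintro ⟨c', (rfl | hc'), h⟩
        · exact Or.inl h
        · exact Or.inr ⟨c', hc', h⟩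
    · intro w c' hc' hw
      rcases List.mem_cons.1 hc' with rfl | hc'
      · exact (hlccons w hw).of_infix ⟨[], L, by simp⟩
      · exact (hLcons w c' hc' hw).of_infix ⟨lc, [], by simp⟩

/-- Existence of a conforming Hamiltonian-style path on the subtree `T(v₀)`,
ending at a prescribed `x ∈ T(v₀)`. -/
lemma lemA [Finite V] (T : ParentTree V) : ∀ n, ∀ v₀ x : V, (T.desc v₀).ncard ≤ n →
    x ∈ T.desc v₀ →
    ∃ l : List V, l.Nodup ∧ l ≠ [] ∧ l.getLast? = some x ∧ listSet l = T.desc v₀ ∧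
      (∀ w ∈ T.desc v₀, ConsecutiveIn (T.desc w) l) := by
  intro n
  induction n with
  | zero =>
    intro v₀ x hcard _
    exfalso
    have : 0 < (T.desc v₀).ncard :=
      (Set.ncard_pos (Set.toFinite _)).2 ⟨v₀, T.mem_desc_self v₀⟩
    omega
  | succ n ih =>
    intro v₀ x hcard hx
    classical
    have hchild_card : ∀ c ∈ T.children v₀, (T.desc c).ncard ≤ n := by
      intro c hc
      have hss : T.desc c ⊂ T.desc v₀ :=
        ⟨T.desc_subset_of_child hc, fun hsub => T.not_mem_desc_child hc (hsub (T.mem_desc_self v₀))⟩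
      have := Set.ncard_lt_ncard hss (Set.toFinite _)
      omega
    have hP : ∀ c, c ∈ T.children v₀ → ∃ l : List V, l.Nodup ∧ listSet l = T.desc c ∧
        (∀ w ∈ T.desc c, ConsecutiveIn (T.desc w) l) := by
      intro c hc
      obtain ⟨l, h1, _, _, h4, h5⟩ := ih c c (hchild_card c hc) (T.mem_desc_self c)
      exact ⟨l, h1, h4, h5⟩
    have hdisjkids : ∀ c c', c ∈ T.children v₀ → c' ∈ T.children v₀ → c ≠ c' →
        ∀ z, z ∈ T.desc c → z ∈ T.desc c' → False := by
      intro c c' hc hc' hne z h1 h2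
      exact hne (T.child_unique hc hc' h1 h2)
    have hpw : ∀ cs : List V, cs.Nodup → (∀ c ∈ cs, c ∈ T.children v₀) →
        cs.Pairwise (fun c c' => ∀ z, z ∈ T.desc c → z ∈ T.desc c' → False) := by
      intro cs hnd hmem
      refine List.Pairwise.imp_of_mem ?_ hnd
      intro a b ha hb hne z h1 h2
      exact hdisjkids a b (hmem a ha) (hmem b hb) hne z h1 h2
    by_cases hxv : x = v₀
    · subst hxv
      set cs := (Set.toFinite (T.children x)).toFinset.toList with hcs
      have hcsmem : ∀ c, c ∈ cs ↔ c ∈ T.children x := by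
        intro c; rw [hcs, Finset.mem_toList, Set.Finite.mem_toFinset]
      obtain ⟨L, hLnd, hLset, hLcons⟩ := joinAux T (fun c => c ∈ T.children x) hP cs
        (fun c hc => (hcsmem c).1 hc)
        (hpw cs (Finset.nodup_toList _) (fun c hc => (hcsmem c).1 hc))
      have hsetL : listSet L = T.descU (T.children x) := by
        have hseteq : {c : V | c ∈ cs} = T.children x := Set.ext hcsmem
        rw [hLset, hseteq]
      have hLfull : listSet (L ++ [x]) = T.desc x := by
        rw [listSet_append, hsetL, listSet_singleton, T.desc_eq_self_union x, Set.union_comm]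
      refine ⟨L ++ [x], ?_, by simp, ?_, hLfull, ?_⟩
      · rw [List.nodup_append]
        refine ⟨hLnd, List.nodup_singleton x, fun z hz y hy hzy => ?_⟩
        have hz2 : z ∈ [x] := by rw [hzy]; exact hy
        rw [List.mem_singleton] at hz2
        have hz' : z ∈ T.descU (T.children x) := hsetL ▸ hz
        rw [ParentTree.mem_descU] at hz'
        obtain ⟨c, hc, hzc⟩ := hz'
        exact T.not_mem_desc_child hc (hz2 ▸ hzc)
      · rw [List.getLast?_append_of_ne_nil _ (by simp)]; simp
      · intro w hw
        rw [T.desc_eq_self_union x] at hw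
        rcases hw with hw | hw
        · rw [Set.mem_singleton_iff] at hw
          rw [hw]
          exact ⟨L ++ [x], List.infix_refl _, hLfull⟩
        · rw [ParentTree.mem_descU] at hw
          obtain ⟨c, hc, hwc⟩ := hw
          exact (hLcons w c ((hcsmem c).2 hc) hwc).of_infix ⟨[], [x], by simp⟩
    · have hx' : x ∈ T.descU (T.children v₀) := by
        have := (T.desc_eq_self_union v₀) ▸ hx
        rcases this with h | h
        · exact absurd h hxv
        · exact h
      rw [ParentTree.mem_descU] at hx'
      obtain ⟨c₀, hc₀, hxc₀⟩ := hx'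
      set cs := (Set.toFinite (T.children v₀ \ {c₀})).toFinset.toList with hcs
      have hcsmem : ∀ c, c ∈ cs ↔ c ∈ T.children v₀ ∧ c ≠ c₀ := by
        intro c
        rw [hcs, Finset.mem_toList, Set.Finite.mem_toFinset]
        simp [Set.mem_diff]
      obtain ⟨L, hLnd, hLset, hLcons⟩ := joinAux T (fun c => c ∈ T.children v₀) hP cs
        (fun c hc => ((hcsmem c).1 hc).1)
        (hpw cs (Finset.nodup_toList _) (fun c hc => ((hcsmem c).1 hc).1))
      obtain ⟨l₀, h0nd, h0ne, h0last, h0set, h0cons⟩ := ih c₀ x (hchild_card c₀ hc₀) hxc₀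
      have hLmem : ∀ z ∈ L, ∃ c, (c ∈ T.children v₀ ∧ c ≠ c₀) ∧ z ∈ T.desc c := by
        intro z hz
        have : z ∈ T.descU {c | c ∈ cs} := hLset ▸ hz
        rw [ParentTree.mem_descU] at this
        obtain ⟨c, hc, hzc⟩ := this
        exact ⟨c, (hcsmem c).1 hc, hzc⟩
      have hsetfull : listSet (v₀ :: (L ++ l₀)) = T.desc v₀ := by
        rw [listSet_cons, listSet_append, hLset, h0set, T.desc_eq_self_union v₀]
        ext z
        simp only [Set.mem_insert_iff, Set.mem_union, Set.mem_singleton_iff,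
          ParentTree.mem_descU, Set.mem_setOf_eq]
        constructor
        · rintro (rfl | ⟨c, hc, hzc⟩ | hzc)
          · exact Or.inl rfl
          · exact Or.inr ⟨c, ((hcsmem c).1 hc).1, hzc⟩
          · exact Or.inr ⟨c₀, hc₀, hzc⟩
        · rintro (rfl | ⟨c, hc, hzc⟩)
          · exact Or.inl rfl
          · by_cases hcc : c = c₀
            · subst hcc; exact Or.inr (Or.inr hzc)
            · exact Or.inr (Or.inl ⟨c, (hcsmem c).2 ⟨hc, hcc⟩, hzc⟩)
      refine ⟨v₀ :: (L ++ l₀), ?_, by simp, ?_, hsetfull, ?_⟩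
      · rw [List.nodup_cons, List.nodup_append]
        refine ⟨?_, hLnd, h0nd, ?_⟩
        · intro hmem
          rcases List.mem_append.1 hmem with h | h
          · obtain ⟨c, ⟨hc, _⟩, hzc⟩ := hLmem v₀ h
            exact T.not_mem_desc_child hc hzc
          · exact T.not_mem_desc_child hc₀ (h0set ▸ h)
        · intro z hz b hb hzb
          have hz0 : z ∈ l₀ := by rw [hzb]; exact hb
          obtain ⟨c, ⟨hc, hcc⟩, hzc⟩ := hLmem z hz
          exact hcc (T.child_unique hc hc₀ hzc (h0set ▸ hz0))
      · have : v₀ :: (L ++ l₀) = (v₀ :: L) ++ l₀ := by simp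
        rw [this, List.getLast?_append_of_ne_nil _ h0ne, h0last]
      · intro w hw
        rw [T.desc_eq_self_union v₀] at hw
        rcases hw with hw | hw
        · rw [Set.mem_singleton_iff] at hw
          rw [hw]
          exact ⟨v₀ :: (L ++ l₀), List.infix_refl _, hsetfull⟩
        · rw [ParentTree.mem_descU] at hw
          obtain ⟨c, hc, hwc⟩ := hw
          by_cases hcc : c = c₀
          · subst hcc
            exact (h0cons w hwc).of_infix ⟨v₀ :: L, [], by simp⟩
          · exact (hLcons w c ((hcsmem c).2 ⟨hc, hcc⟩) hwc).of_infix ⟨[v₀], l₀, by simp⟩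

section Ctx

variable {V X : Type} [MetricSpace X] {T : ParentTree V} {f : V → X}

open ParentTree

lemma desc_subset_of_mem {c w : V} (h : w ∈ T.desc c) : T.desc w ⊆ T.desc c :=
  fun _ hz => T.desc_trans hz h

lemma desc_subset_descU {c : V} {U : Set V} (hc : c ∈ U) : T.desc c ⊆ T.descU U :=
  fun z hz => mem_descU.2 ⟨c, hc, hz⟩

lemma descU_empty : T.descU (∅ : Set V) = ∅ := by simp [ParentTree.descU]

/-- A nodup list with equal head and last is a singleton. -/
lemma eq_singleton_of_head_last {l : List V} {a : V} (hnd : l.Nodup)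
    (hh : l.head? = some a) (hl : l.getLast? = some a) : l = [a] := by
  cases l with
  | nil => simp at hh
  | cons b t =>
    simp only [List.head?_cons, Option.some_inj] at hh
    subst hh
    cases t with
    | nil => rfl
    | cons c r =>
      exfalso
      have h1 : (c :: r).getLast? = some b := by
        rw [← hl]; simp [List.getLast?_cons_cons]
      have h2 : b ∈ c :: r := List.mem_of_getLast? h1
      exact (List.nodup_cons.1 hnd).1 h2

/-- Existence of a conforming path realizing the vertex set of `DD T f u Vs x`. -/
lemma lemB [Finite V] (T : ParentTree V) {u : V} {Vs : Set V} (hVs : Vs ⊆ T.children u)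
    {x : V} (hx : x ∈ T.descU Vs ∨ (Vs = ∅ ∧ x = u)) :
    ∃ l : List V, l.Nodup ∧ l.head? = some u ∧ l.getLast? = some x ∧
      listSet l = {u} ∪ T.descU Vs ∧ PathConforms T l := by
  classical
  rcases hx with hx | ⟨rfl, rfl⟩
  · rw [mem_descU] at hx
    obtain ⟨v₀, hv₀, hxv₀⟩ := hx
    set cs := (Set.toFinite (Vs \ {v₀})).toFinset.toList with hcs
    have hcsmem : ∀ c, c ∈ cs ↔ c ∈ Vs ∧ c ≠ v₀ := by
      intro c; rw [hcs, Finset.mem_toList, Set.Finite.mem_toFinset]; simp [Set.mem_diff]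
    have hP : ∀ c, c ∈ Vs → ∃ l : List V, l.Nodup ∧ listSet l = T.desc c ∧
        (∀ w ∈ T.desc c, ConsecutiveIn (T.desc w) l) := by
      intro c _
      obtain ⟨l, h1, _, _, h4, h5⟩ := lemA T (T.desc c).ncard c c le_rfl (T.mem_desc_self c)
      exact ⟨l, h1, h4, h5⟩
    obtain ⟨L, hLnd, hLset, hLcons⟩ := joinAux T (fun c => c ∈ Vs) hP cs
      (fun c hc => ((hcsmem c).1 hc).1)
      (by
        refine List.Pairwise.imp_of_mem ?_ (Finset.nodup_toList _)
        intro a b ha hb hne z h1 h2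
        exact hne (T.child_unique (hVs ((hcsmem a).1 ha).1) (hVs ((hcsmem b).1 hb).1) h1 h2))
    obtain ⟨l₀, h0nd, h0ne, h0last, h0set, h0cons⟩ :=
      lemA T (T.desc v₀).ncard v₀ x le_rfl hxv₀
    have hLmem : ∀ z ∈ L, ∃ c, (c ∈ Vs ∧ c ≠ v₀) ∧ z ∈ T.desc c := by
      intro z hz
      have h := hLset ▸ (mem_listSet.2 hz)
      rw [mem_descU] at h
      obtain ⟨c, hc, hzc⟩ := h
      exact ⟨c, (hcsmem c).1 hc, hzc⟩
    have hsetfull : listSet (u :: (L ++ l₀)) = {u} ∪ T.descU Vs := by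
      rw [listSet_cons, listSet_append, hLset, h0set]
      ext z
      simp only [Set.mem_insert_iff, Set.mem_union, Set.mem_singleton_iff, mem_descU,
        Set.mem_setOf_eq]
      constructor
      · rintro (rfl | ⟨c, hc, hzc⟩ | hzc)
        · exact Or.inl rfl
        · exact Or.inr ⟨c, ((hcsmem c).1 hc).1, hzc⟩
        · exact Or.inr ⟨v₀, hv₀, hzc⟩
      · rintro (rfl | ⟨c, hc, hzc⟩)
        · exact Or.inl rfl
        · by_cases hcc : c = v₀
          · subst hcc; exact Or.inr (Or.inr hzc)
          · exact Or.inr (Or.inl ⟨c, (hcsmem c).2 ⟨hc, hcc⟩, hzc⟩)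
    have hund : u ∉ L ++ l₀ := by
      intro hmem
      rcases List.mem_append.1 hmem with h | h
      · obtain ⟨c, ⟨hc, _⟩, hzc⟩ := hLmem u h
        exact T.not_mem_desc_child (hVs hc) hzc
      · exact T.not_mem_desc_child (hVs hv₀) (h0set ▸ h)
    refine ⟨u :: (L ++ l₀), ?_, by simp, ?_, hsetfull, ?_⟩
    · rw [List.nodup_cons, List.nodup_append]
      refine ⟨hund, hLnd, h0nd, ?_⟩
      intro z hz b hb hzb
      have hz0 : z ∈ l₀ := by rw [hzb]; exact hb
      obtain ⟨c, ⟨hc, hcc⟩, hzc⟩ := hLmem z hz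
      exact hcc (T.child_unique (hVs hc) (hVs hv₀) hzc (h0set ▸ hz0))
    · have e : u :: (L ++ l₀) = (u :: L) ++ l₀ := by simp
      rw [e, List.getLast?_append_of_ne_nil _ h0ne, h0last]
    · intro w hw
      have hwmem : w ∈ listSet (u :: (L ++ l₀)) := hw (T.mem_desc_self w)
      rw [hsetfull] at hwmem
      rcases hwmem with hwu | hwA
      · rw [Set.mem_singleton_iff] at hwu
        rw [hwu] at hw ⊢
        refine ⟨u :: (L ++ l₀), List.infix_refl _, ?_⟩
        refine Set.Subset.antisymm ?_ hw
        rw [hsetfull]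
        rintro z (hz | hz)
        · rw [Set.mem_singleton_iff] at hz
          rw [hz]
          exact T.mem_desc_self u
        · exact T.descU_subset_desc hVs hz
      · rw [mem_descU] at hwA
        obtain ⟨c, hc, hwc⟩ := hwA
        by_cases hcc : c = v₀
        · subst hcc
          exact (h0cons w hwc).of_infix ⟨u :: L, [], by simp⟩
        · exact (hLcons w c ((hcsmem c).2 ⟨hc, hcc⟩) hwc).of_infix ⟨[u], l₀, by simp⟩
  · refine ⟨[x], List.nodup_singleton x, by simp, by simp, ?_, ?_⟩
    · rw [listSet_singleton, descU_empty, Set.union_empty]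
    · intro w hw
      have hwu : w = x := by
        have := hw (T.mem_desc_self w)
        rw [listSet_singleton] at this
        exact this
      rw [hwu] at hw ⊢
      refine ⟨[x], List.infix_refl _, ?_⟩
      rw [listSet_singleton]
      refine Set.Subset.antisymm ?_ (by rw [← listSet_singleton x]; exact hw)
      intro z hz
      rw [Set.mem_singleton_iff] at hz
      rw [hz]
      exact T.mem_desc_self x

/-- The defining set of `DD`. -/
def DDset (T : ParentTree V) (f : V → X) (u : V) (Vs : Set V) (a : V) : Set ℝ :=
  {w | ∃ l : List V, l.Nodup ∧ l.head? = some u ∧ l.getLast? = some a ∧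
    listSet l = {u} ∪ T.descU Vs ∧ PathConforms T l ∧ pathWeight f l = w}

lemma DD_eq (u : V) (Vs : Set V) (a : V) : DD T f u Vs a = sInf (DDset T f u Vs a) := rfl

lemma DDset_nonneg {u a : V} {Vs : Set V} : ∀ w ∈ DDset T f u Vs a, (0:ℝ) ≤ w := by
  rintro w ⟨l, -, -, -, -, -, rfl⟩
  exact pathWeight_nonneg f l

lemma DDset_bdd {u a : V} {Vs : Set V} : BddBelow (DDset T f u Vs a) :=
  ⟨0, fun w hw => DDset_nonneg w hw⟩

lemma DD_nonneg {u a : V} {Vs : Set V} : 0 ≤ DD T f u Vs a :=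
  Real.sInf_nonneg DDset_nonneg

lemma DD_empty [Finite V] (u : V) : DD T f u (∅ : Set V) u = 0 := by
  refine le_antisymm ?_ DD_nonneg
  obtain ⟨l, h1, h2, h3, h4, h5⟩ :=
    lemB T (Set.empty_subset (T.children u)) (Or.inr ⟨rfl, rfl⟩)
  have hl : l = [u] := eq_singleton_of_head_last h1 h2 h3
  subst hl
  have hmem : (0:ℝ) ∈ DDset T f u (∅ : Set V) u :=
    ⟨[u], h1, h2, h3, h4, h5, pathWeight_singleton f u⟩
  exact csInf_le DDset_bdd hmem

end Ctx

section MainCtx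

variable {V X : Type} [MetricSpace X] {T : ParentTree V} {f : V → X} {u v : V} {Vs Ws : Set V}

open ParentTree

lemma ctx_left_disj_desc_v (hVs : Vs ⊆ T.children u) (hv : v ∈ T.children u) (hvVs : v ∉ Vs) :
    ∀ z, z ∈ ({u} ∪ T.descU Vs) → z ∈ T.desc v → False := by
  intro z h1 h2
  rcases h1 with h | h
  · rw [Set.mem_singleton_iff] at h
    exact T.not_mem_desc_child hv (h ▸ h2)
  · rw [mem_descU] at h
    obtain ⟨c, hc, hzc⟩ := h
    exact hvVs ((T.child_unique (hVs hc) hv hzc h2) ▸ hc)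

lemma ctx_right_sub_desc_v (hWs : Ws ⊆ T.children v) :
    ∀ z, z ∈ (T.descU Ws ∪ {v}) → z ∈ T.desc v := by
  intro z hz
  rcases hz with h | h
  · exact T.descU_subset_desc hWs h
  · rw [Set.mem_singleton_iff] at h
    rw [h]; exact T.mem_desc_self v

lemma ctx_full_sub_desc_u (hVs : Vs ⊆ T.children u) (hv : v ∈ T.children u)
    (hWs : Ws ⊆ T.children v) :
    ({u} ∪ T.descU Vs ∪ T.descU Ws ∪ {v} : Set V) ⊆ T.desc u := by
  intro z hz
  rcases hz with ((h | h) | h) | h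
  · rw [Set.mem_singleton_iff] at h; rw [h]; exact T.mem_desc_self u
  · exact T.descU_subset_desc hVs h
  · exact T.desc_subset_of_child hv (T.descU_subset_desc hWs h)
  · rw [Set.mem_singleton_iff] at h; rw [h]; exact T.mem_desc_of_child hv

/-- The defining set of `DW`. -/
def DWset (T : ParentTree V) (f : V → X) (u : V) (Vs : Set V) (v : V) (Ws : Set V) : Set ℝ :=
  {w | ∃ l : List V, l.Nodup ∧ l.head? = some u ∧ l.getLast? = some v ∧
    listSet l = {u} ∪ T.descU Vs ∪ T.descU Ws ∪ {v} ∧ PathConforms T l ∧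
    (∃ l₁ l₂ : List V, l = l₁ ++ l₂ ∧ listSet l₁ = {u} ∪ T.descU Vs) ∧
    pathWeight f l = w}

lemma DW_eq : DW T f u Vs v Ws = sInf (DWset T f u Vs v Ws) := rfl

lemma DWset_nonneg : ∀ w ∈ DWset T f u Vs v Ws, (0:ℝ) ≤ w := by
  rintro w ⟨l, -, -, -, -, -, -, rfl⟩
  exact pathWeight_nonneg f l

lemma DWset_bdd : BddBelow (DWset T f u Vs v Ws) := ⟨0, fun w hw => DWset_nonneg w hw⟩

lemma DW_comp (hVs : Vs ⊆ T.children u) (hv : v ∈ T.children u) (hvVs : v ∉ Vs)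
    (hWs : Ws ⊆ T.children v) {x y : V} {l₁ l₂ : List V}
    (h1nd : l₁.Nodup) (h1h : l₁.head? = some u) (h1l : l₁.getLast? = some x)
    (h1s : listSet l₁ = {u} ∪ T.descU Vs) (h1c : PathConforms T l₁)
    (h2nd : l₂.Nodup) (h2h : l₂.head? = some v) (h2l : l₂.getLast? = some y)
    (h2s : listSet l₂ = {v} ∪ T.descU Ws) (h2c : PathConforms T l₂) :
    pathWeight f l₁ + dist (f x) (f y) + pathWeight f l₂ ∈ DWset T f u Vs v Ws := by
  have h1ne : l₁ ≠ [] := fun h => by rw [h] at h1h; simp at h1h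
  have h2ne : l₂ ≠ [] := fun h => by rw [h] at h2h; simp at h2h
  have hRne : l₂.reverse ≠ [] := fun h => h2ne (by simpa using h)
  have hRs : listSet l₂.reverse = {v} ∪ T.descU Ws := by rw [listSet_reverse]; exact h2s
  have hRh : l₂.reverse.head? = some y := by simp [h2l]
  have hRl : l₂.reverse.getLast? = some v := by simp [h2h]
  have hdisj : l₁.Disjoint l₂.reverse := by
    intro z hz1 hz2
    have hz1' : z ∈ ({u} ∪ T.descU Vs : Set V) := h1s ▸ hz1
    have hz2' : z ∈ ({v} ∪ T.descU Ws : Set V) := hRs ▸ (mem_listSet.2 hz2)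
    refine ctx_left_disj_desc_v hVs hv hvVs z hz1' (ctx_right_sub_desc_v hWs z ?_)
    rcases hz2' with h | h
    · exact Or.inr h
    · exact Or.inl h
  have hset : listSet (l₁ ++ l₂.reverse) = {u} ∪ T.descU Vs ∪ T.descU Ws ∪ {v} := by
    rw [listSet_append, h1s, hRs]
    ext z
    simp only [Set.mem_union, Set.mem_singleton_iff]
    tauto
  refine ⟨l₁ ++ l₂.reverse, ?_, ?_, ?_, hset, ?_, ⟨l₁, l₂.reverse, rfl, h1s⟩, ?_⟩
  · rw [List.nodup_append]
    exact ⟨h1nd, List.nodup_reverse.2 h2nd, fun a ha b hb hab => hdisj ha (by rw [hab]; exact hb)⟩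
  · rw [head?_append_of_ne_nil _ h1ne]; exact h1h
  · rw [List.getLast?_append_of_ne_nil _ hRne]; exact hRl
  · -- conformity
    intro w hw
    have hwm : w ∈ listSet (l₁ ++ l₂.reverse) := hw (T.mem_desc_self w)
    rw [hset] at hwm
    have hdescv : w ∈ T.desc v → ConsecutiveIn (T.desc w) (l₁ ++ l₂.reverse) := by
      intro hwv
      have hsub : T.desc w ⊆ listSet l₂.reverse := by
        intro z hz
        have hzv : z ∈ T.desc v := desc_subset_of_mem hwv hz
        have hzfull : z ∈ ({u} ∪ T.descU Vs ∪ T.descU Ws ∪ {v} : Set V) := by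
          rw [← hset]; exact hw hz
        rw [hRs]
        rcases hzfull with ((h | h) | h) | h
        · exact absurd hzv (fun h2 => ctx_left_disj_desc_v hVs hv hvVs z (Or.inl h) h2)
        · exact absurd hzv (fun h2 => ctx_left_disj_desc_v hVs hv hvVs z (Or.inr h) h2)
        · exact Or.inr h
        · exact Or.inl h
      exact ((h2c.rev) w hsub).of_infix ⟨l₁, [], by simp⟩
    rcases hwm with ((h | h) | h) | h
    · rw [Set.mem_singleton_iff] at h
      rw [h] at hw ⊢
      refine ⟨l₁ ++ l₂.reverse, List.infix_refl _, Set.Subset.antisymm ?_ hw⟩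
      rw [hset]
      exact ctx_full_sub_desc_u hVs hv hWs
    · rw [mem_descU] at h
      obtain ⟨c, hc, hwc⟩ := h
      have hsub : T.desc w ⊆ listSet l₁ := by
        rw [h1s]
        intro z hz
        exact Or.inr (desc_subset_descU hc (desc_subset_of_mem hwc hz))
      exact (h1c w hsub).of_infix ⟨[], l₂.reverse, by simp⟩
    · exact hdescv (T.descU_subset_desc hWs h)
    · rw [Set.mem_singleton_iff] at h
      exact hdescv (by rw [h]; exact T.mem_desc_self v)
  · -- weight
    cases e : l₂.reverse with
    | nil => exact absurd e hRne
    | cons y' t =>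
      have hy' : y' = y := by rw [e] at hRh; simpa using hRh
      have hpw : pathWeight f (y' :: t) = pathWeight f l₂ := by
        rw [← e, pathWeight_reverse]
      rw [pathWeight_append f h1l y' t, hpw, hy']

lemma DW_decomp (hVs : Vs ⊆ T.children u) (hv : v ∈ T.children u) (hvVs : v ∉ Vs)
    (hWs : Ws ⊆ T.children v) {r : ℝ} (hr : r ∈ DWset T f u Vs v Ws) :
    ∃ x y, (x ∈ T.descU Vs ∨ (Vs = ∅ ∧ x = u)) ∧ (y ∈ T.descU Ws ∨ (Ws = ∅ ∧ y = v)) ∧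
      DD T f u Vs x + dist (f x) (f y) + DD T f v Ws y ≤ r := by
  obtain ⟨l, hnd, hh, hl, hset, hconf, ⟨l₁, l₂, rfl, h1s⟩, rfl⟩ := hr
  obtain ⟨h1nd, h2nd, hdisj⟩ := List.nodup_append.1 hnd
  have h1ne : l₁ ≠ [] := by
    intro h
    rw [h, listSet_nil] at h1s
    exact absurd (h1s.symm ▸ (Set.mem_union_left _ rfl)) (Set.notMem_empty u)
  have hh1 : l₁.head? = some u := by rw [head?_append_of_ne_nil _ h1ne] at hh; exact hh
  have h2s : listSet l₂ = T.descU Ws ∪ {v} := by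
    ext z
    constructor
    · intro hz
      have hzl : z ∈ listSet (l₁ ++ l₂) := by rw [listSet_append]; exact Or.inr hz
      have hz1 : z ∉ listSet l₁ := fun h => hdisj z h z (mem_listSet.1 hz) rfl
      rw [hset] at hzl
      rw [h1s] at hz1
      rcases hzl with ((h | h) | h) | h
      · exact absurd (Or.inl h) hz1
      · exact absurd (Or.inr h) hz1
      · exact Or.inl h
      · exact Or.inr h
    · intro hz
      have hzl : z ∈ listSet (l₁ ++ l₂) := by
        rw [hset]
        rcases hz with h | h
        · exact Or.inl (Or.inr h)
        · exact Or.inr h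
      rw [listSet_append] at hzl
      rcases hzl with h | h
      · exact absurd (ctx_right_sub_desc_v hWs z hz)
          (fun h2 => ctx_left_disj_desc_v hVs hv hvVs z (h1s ▸ h) h2)
      · exact h
  have h2ne : l₂ ≠ [] := by
    intro h
    rw [h, listSet_nil] at h2s
    exact absurd (h2s.symm ▸ (Set.mem_union_right _ rfl)) (Set.notMem_empty v)
  have hl2 : l₂.getLast? = some v := by
    rw [List.getLast?_append_of_ne_nil _ h2ne] at hl; exact hl
  cases e1 : l₁.getLast? with
  | none => exact absurd (List.getLast?_eq_none_iff.1 e1) h1ne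
  | some x =>
  cases e2 : l₂.head? with
  | none => exact absurd (List.head?_eq_none_iff.1 e2) h2ne
  | some y =>
  have hx : x ∈ listSet l₁ := List.mem_of_getLast? e1
  have hy : y ∈ listSet l₂ := List.mem_of_mem_head? (e2 ▸ rfl)
  have hxspec : x ∈ T.descU Vs ∨ (Vs = ∅ ∧ x = u) := by
    rw [h1s] at hx
    rcases hx with h | h
    · rw [Set.mem_singleton_iff] at h
      right
      refine ⟨?_, h⟩
      by_contra hVne
      obtain ⟨c, hc⟩ := Set.nonempty_iff_ne_empty.2 hVne
      have hl1 : l₁ = [u] := eq_singleton_of_head_last h1nd hh1 (by rw [e1, h])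
      have : c ∈ listSet l₁ := by
        rw [h1s]
        exact Or.inr (desc_subset_descU hc (T.mem_desc_self c))
      rw [hl1, listSet_singleton, Set.mem_singleton_iff] at this
      exact (hVs hc).2 this
    · exact Or.inl h
  have hyspec : y ∈ T.descU Ws ∨ (Ws = ∅ ∧ y = v) := by
    rw [h2s] at hy
    rcases hy with h | h
    · exact Or.inl h
    · rw [Set.mem_singleton_iff] at h
      right
      refine ⟨?_, h⟩
      by_contra hWne
      obtain ⟨c, hc⟩ := Set.nonempty_iff_ne_empty.2 hWne
      have hl2' : l₂ = [v] := eq_singleton_of_head_last h2nd (by rw [e2, h]) hl2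
      have : c ∈ listSet l₂ := by
        rw [h2s]
        exact Or.inl (desc_subset_descU hc (T.mem_desc_self c))
      rw [hl2', listSet_singleton, Set.mem_singleton_iff] at this
      exact (hWs hc).2 this
  refine ⟨x, y, hxspec, hyspec, ?_⟩
  have hDD1 : DD T f u Vs x ≤ pathWeight f l₁ :=
    csInf_le DDset_bdd ⟨l₁, h1nd, hh1, e1, h1s, hconf.append_left hnd, rfl⟩
  have hDD2 : DD T f v Ws y ≤ pathWeight f l₂ := by
    rw [← pathWeight_reverse]
    refine csInf_le DDset_bdd ⟨l₂.reverse, List.nodup_reverse.2 h2nd, by simp [hl2],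
      by simp [e2], ?_, (hconf.append_right hnd).rev, rfl⟩
    rw [listSet_reverse, h2s, Set.union_comm]
  cases e3 : l₂ with
  | nil => exact absurd e3 h2ne
  | cons y' t =>
    have hy' : y' = y := by rw [e3] at e2; simpa using e2
    have hpw : pathWeight f (y' :: t) = pathWeight f l₂ := by rw [← e3]
    rw [pathWeight_append f e1 y' t, hpw, hy']
    linarith

end MainCtx

section Final

variable {V X : Type} [Finite V] [MetricSpace X] {T : ParentTree V} {f : V → X} {u v : V}
  {Vs Ws : Set V}

open ParentTree

lemma DW_le_of_specs (hVs : Vs ⊆ T.children u) (hv : v ∈ T.children u) (hvVs : v ∉ Vs)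
    (hWs : Ws ⊆ T.children v) {x y : V}
    (hx : x ∈ T.descU Vs ∨ (Vs = ∅ ∧ x = u)) (hy : y ∈ T.descU Ws ∨ (Ws = ∅ ∧ y = v)) :
    DW T f u Vs v Ws ≤ DD T f u Vs x + dist (f x) (f y) + DD T f v Ws y := by
  apply le_of_forall_pos_le_add
  intro ε hε
  have hne1 : (DDset T f u Vs x).Nonempty := by
    obtain ⟨l, h1, h2, h3, h4, h5⟩ := lemB T hVs hx
    exact ⟨pathWeight f l, l, h1, h2, h3, h4, h5, rfl⟩
  have hne2 : (DDset T f v Ws y).Nonempty := by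
    obtain ⟨l, h1, h2, h3, h4, h5⟩ := lemB T hWs hy
    exact ⟨pathWeight f l, l, h1, h2, h3, h4, h5, rfl⟩
  obtain ⟨w1, hw1mem, hw1lt⟩ := Real.lt_sInf_add_pos hne1 (half_pos hε)
  obtain ⟨w2, hw2mem, hw2lt⟩ := Real.lt_sInf_add_pos hne2 (half_pos hε)
  obtain ⟨l₁, h1nd, h1h, h1l, h1s, h1c, rfl⟩ := hw1mem
  obtain ⟨l₂, h2nd, h2h, h2l, h2s, h2c, rfl⟩ := hw2mem
  have hmem := DW_comp (f := f) hVs hv hvVs hWs h1nd h1h h1l h1s h1c h2nd h2h h2l h2s h2c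
  have hDW : sInf (DWset T f u Vs v Ws) ≤ pathWeight f l₁ + dist (f x) (f y) + pathWeight f l₂ :=
    csInf_le (DWset_bdd (T := T) (f := f) (u := u) (v := v) (Vs := Vs) (Ws := Ws)) hmem
  rw [DW_eq]
  have hw1' : pathWeight f l₁ < DD T f u Vs x + ε/2 := hw1lt
  have hw2' : pathWeight f l₂ < DD T f v Ws y + ε/2 := hw2lt
  linarith

lemma spec_exists (hVs : Vs ⊆ T.children u) :
    ∃ x, x ∈ T.descU Vs ∨ (Vs = ∅ ∧ x = u) := by
  classical
  by_cases hV : Vs = ∅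
  · exact ⟨u, Or.inr ⟨hV, rfl⟩⟩
  · obtain ⟨c, hc⟩ := Set.nonempty_iff_ne_empty.2 hV
    exact ⟨c, Or.inl (desc_subset_descU hc (T.mem_desc_self c))⟩

lemma DWset_nonempty (hVs : Vs ⊆ T.children u) (hv : v ∈ T.children u) (hvVs : v ∉ Vs)
    (hWs : Ws ⊆ T.children v) : (DWset T f u Vs v Ws).Nonempty := by
  obtain ⟨x, hx⟩ := spec_exists hVs
  obtain ⟨y, hy⟩ := spec_exists hWs
  obtain ⟨l₁, h1nd, h1h, h1l, h1s, h1c⟩ := lemB T hVs hx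
  obtain ⟨l₂, h2nd, h2h, h2l, h2s, h2c⟩ := lemB T hWs hy
  exact ⟨_, DW_comp (f := f) hVs hv hvVs hWs h1nd h1h h1l h1s h1c h2nd h2h h2l h2s h2c⟩

end Final

/-- The recurrence (eq-v) for the auxiliary quantities `D^u_{V,W}(v)`. -/
theorem stmt0 {V X : Type} [Fintype V] [MetricSpace X]
    (hn : 3 ≤ Fintype.card V) (f : V → X) (hf : Function.Injective f)
    (T : ParentTree V) (u v : V) (Vs Ws : Set V)
    (hVs : Vs ⊆ T.children u) (hv : v ∈ T.children u) (hvVs : v ∉ Vs)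
    (hWs : Ws ⊆ T.children v) :
    (Vs = ∅ → Ws = ∅ → DW T f u Vs v Ws = dist (f u) (f v)) ∧
    (Vs = ∅ → Ws ≠ ∅ → DW T f u Vs v Ws =
      sInf {r | ∃ y ∈ T.descU Ws, r = dist (f u) (f y) + DD T f v Ws y}) ∧
    (Vs ≠ ∅ → Ws = ∅ → DW T f u Vs v Ws =
      sInf {r | ∃ x ∈ T.descU Vs, r = DD T f u Vs x + dist (f x) (f v)}) ∧
    (Vs ≠ ∅ → Ws ≠ ∅ → DW T f u Vs v Ws =
      sInf {r | ∃ x ∈ T.descU Vs, ∃ y ∈ T.descU Ws,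
        r = DD T f u Vs x + dist (f x) (f y) + DD T f v Ws y}) := by
  refine ⟨?_, ?_, ?_, ?_⟩
  · -- (i) Vs = ∅, Ws = ∅
    rintro rfl rfl
    apply le_antisymm
    · have h := DW_le_of_specs (f := f) hVs hv hvVs hWs (Or.inr ⟨rfl, rfl⟩) (Or.inr ⟨rfl, rfl⟩)
      rwa [DD_empty u, DD_empty v, zero_add, add_zero] at h
    · rw [DW_eq]
      apply le_csInf (DWset_nonempty hVs hv hvVs hWs)
      intro r hr
      obtain ⟨x, y, hx, hy, hle⟩ := DW_decomp hVs hv hvVs hWs hr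
      have hx' : x = u := by
        rcases hx with h | ⟨-, h⟩
        · rw [descU_empty] at h; exact absurd h (Set.notMem_empty x)
        · exact h
      have hy' : y = v := by
        rcases hy with h | ⟨-, h⟩
        · rw [descU_empty] at h; exact absurd h (Set.notMem_empty y)
        · exact h
      rw [hx', hy', DD_empty u, DD_empty v] at hle
      linarith
  · -- (ii) Vs = ∅, Ws ≠ ∅
    rintro rfl hW
    have hSbdd : BddBelow {r | ∃ y ∈ T.descU Ws, r = dist (f u) (f y) + DD T f v Ws y} := by
      refine ⟨0, ?_⟩
      rintro r ⟨y, hy, rfl⟩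
      exact add_nonneg dist_nonneg DD_nonneg
    apply le_antisymm
    · apply le_csInf
      · obtain ⟨w₀, hw₀⟩ := Set.nonempty_iff_ne_empty.2 hW
        exact ⟨_, w₀, desc_subset_descU hw₀ (T.mem_desc_self w₀), rfl⟩
      · rintro r ⟨y, hyB, rfl⟩
        have h := DW_le_of_specs (f := f) hVs hv hvVs hWs (Or.inr ⟨rfl, rfl⟩) (Or.inl hyB)
        rwa [DD_empty u, zero_add] at h
    · rw [DW_eq]
      apply le_csInf (DWset_nonempty hVs hv hvVs hWs)
      intro r hr
      obtain ⟨x, y, hx, hy, hle⟩ := DW_decomp hVs hv hvVs hWs hr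
      have hx' : x = u := by
        rcases hx with h | ⟨-, h⟩
        · rw [descU_empty] at h; exact absurd h (Set.notMem_empty x)
        · exact h
      have hyB : y ∈ T.descU Ws := by
        rcases hy with h | ⟨h, -⟩
        · exact h
        · exact absurd h hW
      refine le_trans (csInf_le hSbdd ⟨y, hyB, rfl⟩) ?_
      rw [hx', DD_empty u] at hle
      linarith
  · -- (iii) Vs ≠ ∅, Ws = ∅
    rintro hV rfl
    have hSbdd : BddBelow {r | ∃ x ∈ T.descU Vs, r = DD T f u Vs x + dist (f x) (f v)} := by
      refine ⟨0, ?_⟩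
      rintro r ⟨x, hx, rfl⟩
      exact add_nonneg DD_nonneg dist_nonneg
    apply le_antisymm
    · apply le_csInf
      · obtain ⟨v₀, hv₀⟩ := Set.nonempty_iff_ne_empty.2 hV
        exact ⟨_, v₀, desc_subset_descU hv₀ (T.mem_desc_self v₀), rfl⟩
      · rintro r ⟨x, hxA, rfl⟩
        have h := DW_le_of_specs (f := f) hVs hv hvVs hWs (Or.inl hxA) (Or.inr ⟨rfl, rfl⟩)
        rwa [DD_empty v, add_zero] at h
    · rw [DW_eq]
      apply le_csInf (DWset_nonempty hVs hv hvVs hWs)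
      intro r hr
      obtain ⟨x, y, hx, hy, hle⟩ := DW_decomp hVs hv hvVs hWs hr
      have hy' : y = v := by
        rcases hy with h | ⟨-, h⟩
        · rw [descU_empty] at h; exact absurd h (Set.notMem_empty y)
        · exact h
      have hxA : x ∈ T.descU Vs := by
        rcases hx with h | ⟨h, -⟩
        · exact h
        · exact absurd h hV
      refine le_trans (csInf_le hSbdd ⟨x, hxA, rfl⟩) ?_
      rw [hy', DD_empty v] at hle
      linarith
  · -- (iv) Vs ≠ ∅, Ws ≠ ∅
    intro hV hW
    have hSbdd : BddBelow {r | ∃ x ∈ T.descU Vs, ∃ y ∈ T.descU Ws,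
        r = DD T f u Vs x + dist (f x) (f y) + DD T f v Ws y} := by
      refine ⟨0, ?_⟩
      rintro r ⟨x, hx, y, hy, rfl⟩
      exact add_nonneg (add_nonneg DD_nonneg dist_nonneg) DD_nonneg
    apply le_antisymm
    · apply le_csInf
      · obtain ⟨v₀, hv₀⟩ := Set.nonempty_iff_ne_empty.2 hV
        obtain ⟨w₀, hw₀⟩ := Set.nonempty_iff_ne_empty.2 hW
        exact ⟨_, v₀, desc_subset_descU hv₀ (T.mem_desc_self v₀),
          w₀, desc_subset_descU hw₀ (T.mem_desc_self w₀), rfl⟩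
      · rintro r ⟨x, hxA, y, hyB, rfl⟩
        exact DW_le_of_specs (f := f) hVs hv hvVs hWs (Or.inl hxA) (Or.inl hyB)
    · rw [DW_eq]
      apply le_csInf (DWset_nonempty hVs hv hvVs hWs)
      intro r hr
      obtain ⟨x, y, hx, hy, hle⟩ := DW_decomp hVs hv hvVs hWs hr
      have hxA : x ∈ T.descU Vs := by
        rcases hx with h | ⟨h, -⟩
        · exact h
        · exact absurd h hV
      have hyB : y ∈ T.descU Ws := by
        rcases hy with h | ⟨h, -⟩
        · exact h
        · exact absurd h hW
      exact le_trans (csInf_le hSbdd ⟨x, hxA, y, hyB, rfl⟩) hle
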